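/- Let A be a commutative unital complex Banach algebra whose set of invertible elements is dense in A, and let P be a monic polynomial with coefficients in A. Then the set { c ∈ A : P(c) is invertible in A } is dense in A, where P(c) denotes the evaluation of P at c. -/

import Mathlib

open Polynomial

section aux

variable {A : Type*} [NormedCommRing A] [NormedAlgebra ℂ A]

/-- Left multiplication by a unit, as a continuous linear equivalence. -/
noncomputable def unitMulCLE (u : Aˣ) : A ≃L[ℂ] A where
  toFun := fun x => (u : A) * x
  invFun := fun x => ((u⁻¹ : Aˣ) : A) * x
  map_add' := mul_add _
  map_smul' := fun m x => by simp [mul_smul_comm]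
  left_inv := fun x => by
    show ((u⁻¹ : Aˣ) : A) * ((u : A) * x) = x
    rw [← mul_assoc, Units.inv_mul, one_mul]
  right_inv := fun x => by
    show (u : A) * (((u⁻¹ : Aˣ) : A) * x) = x
    rw [← mul_assoc, Units.mul_inv, one_mul]
  continuous_toFun := continuous_const.mul continuous_id
  continuous_invFun := continuous_const.mul continuous_id

theorem hasStrictFDerivAt_pow_succ (n : ℕ) (c : A) :
    HasStrictFDerivAt (fun x : A => x ^ (n + 1))
      ((((n : A) + 1) * c ^ n) • ContinuousLinearMap.id ℂ A) c := by
  induction n with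
  | zero =>
      have h := hasStrictFDerivAt_id (𝕜 := ℂ) c
      simp only [Function.id_def] at h
      have hf : (fun x : A => x) = fun x : A => x ^ (0 + 1) := by
        funext x; simp
      rw [hf] at h
      convert h using 1
      ext x
      simp
  | succ n ih =>
      have hid := hasStrictFDerivAt_id (𝕜 := ℂ) c
      simp only [Function.id_def] at hid
      have h : HasStrictFDerivAt (fun y : A => y ^ (n + 1) * y) _ c := ih.mul hid
      have hf : (fun y : A => y ^ (n + 1) * y) = fun y : A => y ^ (n + 1 + 1) := by
        funext y; rw [← pow_succ]
      rw [hf] at h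
      convert h using 1
      ext x
      simp only [ContinuousLinearMap.add_apply, ContinuousLinearMap.smul_apply,
        ContinuousLinearMap.id_apply, smul_eq_mul]
      push_cast
      ring

theorem hasStrictFDerivAt_eval (p : Polynomial A) (c : A) :
    HasStrictFDerivAt (fun x : A => Polynomial.eval x p)
      ((Polynomial.eval c (Polynomial.derivative p)) • ContinuousLinearMap.id ℂ A) c := by
  induction p using Polynomial.induction_on' with
  | add p q hp hq =>
      have h : HasStrictFDerivAt (fun x : A => Polynomial.eval x p + Polynomial.eval x q) _ c :=
        hp.add hq
      have hf : (fun x : A => Polynomial.eval x p + Polynomial.eval x q)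
          = fun x : A => Polynomial.eval x (p + q) := by
        funext x; simp
      rw [hf] at h
      convert h using 1
      ext x
      simp [add_mul]
  | monomial n a =>
      cases n with
      | zero =>
          have h := hasStrictFDerivAt_const (𝕜 := ℂ) a c
          have hf : (fun _ : A => a) = fun x : A => Polynomial.eval x (monomial 0 a) := by
            funext x; simp
          rw [hf] at h
          convert h using 1
          ext x
          simp
      | succ m =>
          have h : HasStrictFDerivAt (fun y : A => a * y ^ (m + 1)) _ c :=
            (hasStrictFDerivAt_const (𝕜 := ℂ) a c).mul
            (hasStrictFDerivAt_pow_succ m c)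
          have hf : (fun y : A => a * y ^ (m + 1))
              = fun x : A => Polynomial.eval x (monomial (m + 1) a) := by
            funext y; simp
          rw [hf] at h
          convert h using 1
          ext x
          simp only [derivative_monomial, eval_monomial, ContinuousLinearMap.add_apply,
            ContinuousLinearMap.smul_apply, ContinuousLinearMap.id_apply, smul_eq_mul,
            ContinuousLinearMap.zero_apply, Nat.add_sub_cancel]
          push_cast
          ring

end aux

/-- If a commutative unital complex Banach algebra `A` has dense invertible group and `P` is
a monic polynomial over `A`, then the set of `c ∈ A` for which `P(c)` is invertible is dense
in `A`. -/
theorem dense_invertible_evaluations_of_monic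
    (A : Type*) [NormedCommRing A] [NormedAlgebra ℂ A] [CompleteSpace A]
    (hA : Dense {a : A | IsUnit a})
    (P : Polynomial A) (hP : P.Monic) :
    Dense {c : A | IsUnit (P.eval c)} := by
  rcases subsingleton_or_nontrivial A with hs | hnt
  · have : {c : A | IsUnit (P.eval c)} = Set.univ := by
      ext c; simp [isUnit_of_subsingleton, Subsingleton.elim (eval c P) 1]
    rw [this]; exact dense_univ
  suffices H : ∀ n : ℕ, ∀ P : Polynomial A, P.Monic → P.natDegree = n →
      Dense {c : A | IsUnit (P.eval c)} from H P.natDegree P hP rfl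
  intro n
  induction n with
  | zero =>
      intro P hP hd
      have hP1 : P = 1 := hP.natDegree_eq_zero.mp hd
      have : {c : A | IsUnit (P.eval c)} = Set.univ := by
        ext c; simp [hP1]
      rw [this]; exact dense_univ
  | succ n ih =>
      intro P hP hd
      have hnc : ((n : ℂ) + 1) ≠ 0 := by
        exact_mod_cast Nat.cast_add_one_ne_zero (R := ℂ) n
      set k : A := algebraMap ℂ A ((n : ℂ) + 1) with hk
      set kinv : A := algebraMap ℂ A ((n : ℂ) + 1)⁻¹ with hkinv
      have hkk : kinv * k = 1 := by
        rw [hk, hkinv, ← map_mul, inv_mul_cancel₀ hnc, map_one]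
      have hkk' : k * kinv = 1 := by rw [mul_comm]; exact hkk
      have hkcast : ((n : A) + 1) = k := by
        rw [hk, map_add, map_natCast, map_one]
      set Q : Polynomial A := C kinv * Polynomial.derivative P with hQ
      have hcoeffP : P.coeff (n + 1) = 1 := by
        have := hP.coeff_natDegree
        rwa [hd] at this
      have hQcoeff : Q.coeff n = 1 := by
        rw [hQ, Polynomial.coeff_C_mul, Polynomial.coeff_derivative, hcoeffP, one_mul,
          hkcast, hkk]
        
      have hQdeg_le : Q.natDegree ≤ n := by
        refine (Polynomial.natDegree_C_mul_le _ _).trans ?_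
        have h2 := Polynomial.natDegree_derivative_le P
        rw [hd] at h2
        simpa using h2
      have hQmonic : Q.Monic :=
        Polynomial.monic_of_natDegree_le_of_coeff_eq_one n hQdeg_le hQcoeff
      have hQdeg : Q.natDegree = n :=
        le_antisymm hQdeg_le
          (Polynomial.le_natDegree_of_ne_zero (by rw [hQcoeff]; exact one_ne_zero))
      have hDP : Polynomial.derivative P = C k * Q := by
        rw [hQ, ← mul_assoc, ← Polynomial.C_mul, hkk', Polynomial.C_1, one_mul]
      have hkunit : IsUnit k := by
        rw [hk]
        exact (isUnit_iff_ne_zero.mpr hnc).map (algebraMap ℂ A)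
      have hdense : Dense {c : A | IsUnit ((Polynomial.derivative P).eval c)} := by
        refine (ih Q hQmonic hQdeg).mono ?_
        intro c hc
        rw [Set.mem_setOf_eq, hDP, Polynomial.eval_mul, Polynomial.eval_C]
        exact hkunit.mul hc
      -- now use the inverse function theorem
      rw [Metric.dense_iff]
      intro x r hr
      obtain ⟨c₀, hc₀ball, hc₀unit⟩ := Metric.dense_iff.mp hdense x (r / 2) (by positivity)
      set u : Aˣ := hc₀unit.unit with hu
      have hder : HasStrictFDerivAt (fun y : A => Polynomial.eval y P)
          ((unitMulCLE u : A ≃L[ℂ] A) : A →L[ℂ] A) c₀ := by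
        have h := hasStrictFDerivAt_eval P c₀
        have heq : ((unitMulCLE u : A ≃L[ℂ] A) : A →L[ℂ] A)
            = (Polynomial.eval c₀ (Polynomial.derivative P)) • ContinuousLinearMap.id ℂ A := by
          ext y
          show (u : A) * y = _
          rw [hu, IsUnit.unit_spec]
          simp [smul_eq_mul]
        rw [heq]
        exact h
      have hmap := hder.map_nhds_eq_of_equiv
      have himg : (fun y : A => Polynomial.eval y P) '' Metric.ball c₀ (r / 2)
          ∈ nhds (Polynomial.eval c₀ P) := by
        rw [← hmap]
        exact Filter.image_mem_map (Metric.ball_mem_nhds c₀ (by positivity))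
      obtain ⟨y, hyunit, hyint⟩ := hA.exists_mem_open isOpen_interior
        ⟨_, mem_interior_iff_mem_nhds.mpr himg⟩
      obtain ⟨c', hc'ball, hc'eval⟩ := interior_subset hyint
      refine ⟨c', ?_, ?_⟩
      · rw [Metric.mem_ball] at *
        calc dist c' x ≤ dist c' c₀ + dist c₀ x := dist_triangle _ _ _
          _ < r / 2 + r / 2 := add_lt_add hc'ball hc₀ball
          _ = r := by ring
      · rw [Set.mem_setOf_eq]
        rw [show Polynomial.eval c' P = y from hc'eval]
        exact hyunit
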